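/- Let P ⊆ ℂ be compact, equipped with the restriction of Lebesgue measure, let 1 ≤ q < ∞, let A : P → ℂ^{n×n} be continuous, and let B : P → ℂ^{n×m} have columns b_1, …, b_m in L^q(P, ℂ^n). If the pair (A, B) is L^q-ensemble reachable, then for almost every θ ∈ P: (a) the Kalman matrix (B(θ), A(θ)B(θ), …, A(θ)^{n−1}B(θ)) has rank n; and (b) every eigenvalue λ of A(θ) satisfies dim ker(λI − A(θ)) ≤ m, i.e. has geometric multiplicity at most m (in particular geometric multiplicity one when m = 1). -/

import Mathlib

open Polynomial Matrix MeasureTheory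

/-- The restriction of Lebesgue measure on `ℂ` to a subset `P`, as a measure on the
subtype `↥P`. -/
noncomputable def lebesgueOn (P : Set ℂ) : Measure P :=
  Measure.comap Subtype.val volume

/-- `L^q`-ensemble reachability of a pair `(A, B)`: the span of the functions
`θ ↦ A(θ)^k b_j(θ)` is dense in `L^q(P, ℂ^n)`, expressed via approximation by
`∑_j p_j(A(θ)) b_j(θ)` with polynomials `p_j` in the `L^q`-norm. -/
def LqEnsembleReachable {n m : ℕ} (P : Set ℂ) (q : ℝ)
    (A : P → Matrix (Fin n) (Fin n) ℂ) (B : P → Matrix (Fin n) (Fin m) ℂ) : Prop :=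
  ∀ f : P → Fin n → ℂ, MemLp f (ENNReal.ofReal q) (lebesgueOn P) →
    ∀ ε : ℝ, 0 < ε → ∃ p : Fin m → Polynomial ℂ,
      eLpNorm
        (fun θ => (∑ j : Fin m, (Polynomial.aeval (A θ) (p j)).mulVec fun i => B θ i j) - f θ)
        (ENNReal.ofReal q) (lebesgueOn P) < ENNReal.ofReal ε

open Module LinearMap

noncomputable def kalman {n m : ℕ} (A : Matrix (Fin n) (Fin n) ℂ) (B : Matrix (Fin n) (Fin m) ℂ) :
    Matrix (Fin n) (Fin n × Fin m) ℂ :=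
  Matrix.of fun i kj => ((A ^ (kj.1 : ℕ)).mulVec fun i' => B i' kj.2) i

lemma my_sum_mulVec {n : ℕ} {ι : Type*} (s : Finset ι)
    (M : ι → Matrix (Fin n) (Fin n) ℂ) (b : Fin n → ℂ) :
    (∑ i ∈ s, M i) *ᵥ b = ∑ i ∈ s, M i *ᵥ b := by
  induction s using Finset.cons_induction with
  | empty => simp [Matrix.zero_mulVec]
  | cons i s hi ih => simp [Finset.sum_cons, Matrix.add_mulVec, ih]

lemma mem_kalman_range {n m : ℕ} (A : Matrix (Fin n) (Fin n) ℂ)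
    (B : Matrix (Fin n) (Fin m) ℂ) (p : Fin m → ℂ[X]) :
    (∑ j : Fin m, (aeval A (p j)).mulVec fun i => B i j)
      ∈ LinearMap.range (kalman A B).mulVecLin := by
  rw [Matrix.range_mulVecLin]
  rcases Nat.eq_zero_or_pos n with hn | hn
  · subst hn
    have : (∑ j : Fin m, (aeval A (p j)).mulVec fun i => B i j) = 0 := Subsingleton.elim _ _
    rw [this]; exact Submodule.zero_mem _
  · refine Submodule.sum_mem _ fun j _ => ?_
    have hdeg : (p j %ₘ A.charpoly).natDegree < n := by
      by_cases h0 : p j %ₘ A.charpoly = 0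
      · simpa [h0] using hn
      · rw [Polynomial.natDegree_lt_iff_degree_lt h0]
        have := Polynomial.degree_modByMonic_lt (p j) A.charpoly_monic
        rwa [Matrix.charpoly_degree_eq_dim, Fintype.card_fin] at this
    have h1 : aeval A (p j) = ∑ i ∈ Finset.range n, (p j %ₘ A.charpoly).coeff i • A ^ i := by
      rw [Matrix.aeval_eq_aeval_mod_charpoly, aeval_eq_sum_range' hdeg]
    rw [h1, my_sum_mulVec]
    refine Submodule.sum_mem _ fun i hi => ?_
    rw [Matrix.smul_mulVec]
    refine Submodule.smul_mem _ _ (Submodule.subset_span ?_)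
    exact ⟨(⟨i, Finset.mem_range.mp hi⟩, j), rfl⟩

lemma hautus {n m : ℕ} (A : Matrix (Fin n) (Fin n) ℂ) (B : Matrix (Fin n) (Fin m) ℂ)
    (hrank : (kalman A B).rank = n) (μ : ℂ) :
    Module.finrank ℂ
      (LinearMap.ker (Matrix.toLin' (μ • (1 : Matrix (Fin n) (Fin n) ℂ) - A))) ≤ m := by
  by_contra hlt
  push_neg at hlt
  set M : Matrix (Fin n) (Fin n) ℂ := μ • (1 : Matrix (Fin n) (Fin n) ℂ) - A with hM
  have htl : Matrix.toLin' M = M.mulVecLin := by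
    ext v i; simp [Matrix.toLin'_apply, Matrix.mulVecLin_apply]
  rw [htl] at hlt
  -- kernels of M and Mᵀ have the same finrank
  have h1 := LinearMap.finrank_range_add_finrank_ker M.mulVecLin
  have h2 := LinearMap.finrank_range_add_finrank_ker Mᵀ.mulVecLin
  have hr : Mᵀ.rank = M.rank := Matrix.rank_transpose M
  rw [Matrix.rank] at hr
  rw [Matrix.rank] at hr
  have hker : finrank ℂ (LinearMap.ker Mᵀ.mulVecLin) = finrank ℂ (LinearMap.ker M.mulVecLin) := by
    omega
  have hlt' : m < finrank ℂ (LinearMap.ker Mᵀ.mulVecLin) := by omega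
  -- the map w ↦ Bᵀ *ᵥ w on the left kernel is not injective
  set φ : LinearMap.ker Mᵀ.mulVecLin →ₗ[ℂ] (Fin m → ℂ) :=
    Bᵀ.mulVecLin.comp (LinearMap.ker Mᵀ.mulVecLin).subtype with hφ
  have hninj : ¬ Function.Injective φ := by
    intro hinj
    have := LinearMap.finrank_le_finrank_of_injective hinj
    rw [Module.finrank_fin_fun] at this
    omega
  rw [← LinearMap.ker_eq_bot] at hninj
  obtain ⟨w, hwker, hw0⟩ := (Submodule.ne_bot_iff _).mp hninj
  have hwM : Mᵀ *ᵥ (w : Fin n → ℂ) = 0 := w.2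
  have hwB : Bᵀ *ᵥ (w : Fin n → ℂ) = 0 := hwker
  set w0 : Fin n → ℂ := (w : Fin n → ℂ) with hw0d
  have hvA : w0 ᵥ* A = μ • w0 := by
    have h := hwM
    rw [Matrix.mulVec_transpose, hM] at h
    rw [Matrix.vecMul_sub, sub_eq_zero] at h
    have hsm : w0 ᵥ* (μ • (1 : Matrix (Fin n) (Fin n) ℂ)) = μ • w0 := by
      rw [Matrix.smul_one_eq_diagonal]
      funext j
      rw [Matrix.vecMul_diagonal]
      simp [mul_comm]
    rw [hsm] at h
    exact h.symm
  have hpow : ∀ k : ℕ, w0 ᵥ* (A ^ k) = μ ^ k • w0 := by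
    intro k
    induction k with
    | zero => simp [Matrix.vecMul_one]
    | succ k ih =>
      rw [pow_succ, ← Matrix.vecMul_vecMul, ih]
      rw [Matrix.smul_vecMul, hvA, smul_smul, ← pow_succ]
  have hcolB : ∀ j : Fin m, w0 ⬝ᵥ (fun i => B i j) = 0 := by
    intro j
    have := congrFun hwB j
    simpa [Matrix.mulVec_transpose, Matrix.vecMul, dotProduct] using this
  have hcol : w0 ᵥ* (kalman A B) = 0 := by
    funext kj
    have : (w0 ᵥ* kalman A B) kj = w0 ⬝ᵥ ((A ^ (kj.1 : ℕ)) *ᵥ fun i => B i kj.2) := rfl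
    rw [this, Matrix.dotProduct_mulVec, hpow, smul_dotProduct, hcolB]
    simp
  have htop : LinearMap.range (kalman A B).mulVecLin = ⊤ := by
    apply Submodule.eq_top_of_finrank_eq
    rw [Module.finrank_fin_fun]
    exact hrank
  have : w0 = 0 := by
    funext i
    have hmem : Pi.single i (1 : ℂ) ∈ LinearMap.range (kalman A B).mulVecLin := by
      rw [htop]; trivial
    obtain ⟨x, hx⟩ := hmem
    have hx' : (kalman A B) *ᵥ x = Pi.single i 1 := hx
    have : w0 ⬝ᵥ ((kalman A B) *ᵥ x) = w0 i := by
      rw [hx', dotProduct_single, mul_one]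
    rw [Matrix.dotProduct_mulVec, hcol, zero_dotProduct] at this
    exact this.symm ▸ rfl
  exact hw0 (Subtype.ext this)

lemma continuous_aeval_matrix {n : ℕ} (p : ℂ[X]) :
    Continuous fun M : Matrix (Fin n) (Fin n) ℂ => aeval M p := by
  have h : (fun M : Matrix (Fin n) (Fin n) ℂ => aeval M p)
      = fun M => ∑ i ∈ Finset.range (p.natDegree + 1), p.coeff i • M ^ i := by
    funext M; exact aeval_eq_sum_range M
  rw [h]
  exact continuous_finset_sum _ fun i _ => by fun_prop


set_option maxHeartbeats 1000000 in
/-- necessary conditions for `L^q`-ensemble reachability: for almost every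
`θ ∈ P` the Kalman matrix of `(A(θ), B(θ))` has rank `n` and every eigenvalue of `A(θ)`
has geometric multiplicity at most `m`. -/
theorem stmt_16 {n m : ℕ} (P : Set ℂ) (hP : IsCompact P) (q : ℝ) (hq : 1 ≤ q)
    (A : P → Matrix (Fin n) (Fin n) ℂ) (hA : Continuous A)
    (B : P → Matrix (Fin n) (Fin m) ℂ)
    (hB : ∀ j : Fin m, MemLp (fun θ : P => fun i => B θ i j)
      (ENNReal.ofReal q) (lebesgueOn P))
    (hLq : LqEnsembleReachable P q A B) :
    ∀ᵐ θ ∂(lebesgueOn P),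
      ((Matrix.of fun (i : Fin n) (kj : Fin n × Fin m) =>
        ((A θ ^ (kj.1 : ℕ)).mulVec fun i' => B θ i' kj.2) i).rank = n) ∧
      ∀ μ ∈ spectrum ℂ (A θ),
        Module.finrank ℂ
          (LinearMap.ker (Matrix.toLin' (μ • (1 : Matrix (Fin n) (Fin n) ℂ) - A θ))) ≤ m := by
  classical
  haveI : IsFiniteMeasure (lebesgueOn P) := by
    constructor
    rw [lebesgueOn, (MeasurableEmbedding.subtype_coe hP.isClosed.measurableSet).comap_apply,
      Subtype.coe_image_univ]
    exact hP.measure_lt_top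
  have hpne0 : (ENNReal.ofReal q) ≠ 0 := by
    simp only [ne_eq, ENNReal.ofReal_eq_zero, not_le]; linarith
  have hpnetop : (ENNReal.ofReal q) ≠ ⊤ := ENNReal.ofReal_ne_top
  have key : ∀ v : Fin n → ℂ, ∀ᵐ θ ∂(lebesgueOn P),
      v ∈ LinearMap.range (kalman (A θ) (B θ)).mulVecLin := by
    intro v
    have hfmem : MemLp (fun _ : P => v) (ENNReal.ofReal q) (lebesgueOn P) := memLp_const v
    have hchoice : ∀ k : ℕ, ∃ p : Fin m → ℂ[X],
        eLpNorm
          (fun θ => (∑ j : Fin m, (aeval (A θ) (p j)).mulVec fun i => B θ i j) - v)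
          (ENNReal.ofReal q) (lebesgueOn P) < ENNReal.ofReal (1 / (k + 1)) :=
      fun k => hLq _ hfmem _ (by positivity)
    choose ps hps using hchoice
    set g : ℕ → P → Fin n → ℂ :=
      fun k θ => ∑ j : Fin m, (aeval (A θ) (ps k j)).mulVec fun i => B θ i j with hg
    have hgm : ∀ k, AEStronglyMeasurable (g k) (lebesgueOn P) := by
      intro k
      letI : TopologicalSpace.PseudoMetrizableSpace (Matrix (Fin n) (Fin n) ℂ) :=
        inferInstanceAs (TopologicalSpace.PseudoMetrizableSpace (Fin n → Fin n → ℂ))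
      refine Finset.aestronglyMeasurable_fun_sum _ fun j _ => ?_
      have hc : Continuous fun pr : Matrix (Fin n) (Fin n) ℂ × (Fin n → ℂ) =>
          pr.1.mulVec pr.2 := Continuous.matrix_mulVec continuous_fst continuous_snd
      have h1 : AEStronglyMeasurable (fun θ : P => aeval (A θ) (ps k j)) (lebesgueOn P) :=
        ((continuous_aeval_matrix (ps k j)).comp hA).aestronglyMeasurable
      have h2 := h1.prodMk ((hB j).aestronglyMeasurable)
      have h3 := hc.comp_aestronglyMeasurable h2
      exact h3
    have htendnorm : Filter.Tendsto
        (fun k => eLpNorm (g k - fun _ => v) (ENNReal.ofReal q) (lebesgueOn P))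
        Filter.atTop (nhds 0) := by
      have hub : Filter.Tendsto (fun k : ℕ => ENNReal.ofReal (1 / (k + 1)))
          Filter.atTop (nhds 0) := by
        have := ENNReal.tendsto_ofReal (tendsto_one_div_add_atTop_nhds_zero_nat)
        simpa using this
      refine tendsto_of_tendsto_of_tendsto_of_le_of_le tendsto_const_nhds hub
        (fun k => zero_le) (fun k => le_of_lt ?_)
      exact hps k
    have htm := tendstoInMeasure_of_tendsto_eLpNorm_of_ne_top hpne0 hpnetop hgm
      aestronglyMeasurable_const htendnorm
    obtain ⟨ns, -, hae⟩ := htm.exists_seq_tendsto_ae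
    filter_upwards [hae] with θ hθ
    have hclosed : IsClosed
        ((LinearMap.range (kalman (A θ) (B θ)).mulVecLin : Submodule ℂ (Fin n → ℂ)) :
          Set (Fin n → ℂ)) :=
      Submodule.closed_of_finiteDimensional _
    exact hclosed.mem_of_tendsto hθ
      (Filter.Eventually.of_forall fun l => mem_kalman_range (A θ) (B θ) (ps (ns l)))
  have keyall : ∀ᵐ θ ∂(lebesgueOn P), ∀ i : Fin n,
      Pi.single i (1 : ℂ) ∈ LinearMap.range (kalman (A θ) (B θ)).mulVecLin :=
    ae_all_iff.mpr fun i => key _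
  filter_upwards [keyall] with θ hθ
  have htop : LinearMap.range (kalman (A θ) (B θ)).mulVecLin = ⊤ := by
    rw [Submodule.eq_top_iff']
    intro x
    have hx : x = ∑ i, Pi.single i (x i) := (Finset.univ_sum_single x).symm
    rw [hx]
    refine Submodule.sum_mem _ fun i _ => ?_
    have hsngl : Pi.single i (x i) = x i • (Pi.single i (1 : ℂ) : Fin n → ℂ) := by
      rw [← Pi.single_smul, smul_eq_mul, mul_one]
    rw [hsngl]
    exact Submodule.smul_mem _ _ (hθ i)
  have hrank : (kalman (A θ) (B θ)).rank = n := by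
    rw [Matrix.rank, htop, finrank_top, Module.finrank_fin_fun]
  exact ⟨hrank, fun μ _ => hautus (A θ) (B θ) hrank μ⟩
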